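/- arXiv:2407.13510 — 4 statements merged into one kernel-verified Lean document; each statement's English description precedes it below -/
import Mathlib

section
/- The sign-alignment configuration achieves at least half of the optimal 1-bit SNR: if φ* maximizes γ(φ) = |c^T φ|² over φ ∈ {-1,+1}^N, then γ(φ^SA) ≥ (1/2) γ(φ*). -/
open Finset

/-- The sign of a real number, returning `+1` when the argument is `0`. -/
noncomputable def sgn (t : ℝ) : ℝ := if 0 ≤ t then 1 else -1

/-- The SNR objective `γ(φ) = |c^T φ|²`. -/
noncomputable def gam {N : ℕ} (c : Fin N → ℂ) (φ : Fin N → ℝ) : ℝ :=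
  ‖∑ i, c i * (φ i : ℂ)‖ ^ 2

/-- The sign-alignment configuration: the better of `sign(Re c)` and `sign(Im c)`. -/
noncomputable def phiSA {N : ℕ} (c : Fin N → ℂ) : Fin N → ℝ :=
  if gam c (fun i => sgn (c i).re) ≥ gam c (fun i => sgn (c i).im)
  then (fun i => sgn (c i).re) else (fun i => sgn (c i).im)

lemma mul_sgn (t : ℝ) : t * sgn t = |t| := by
  unfold sgn
  split_ifs with h
  · simp [abs_of_nonneg h]
  · rw [abs_of_neg (lt_of_not_ge h)]; ring

lemma gam_eq {N : ℕ} (c : Fin N → ℂ) (φ : Fin N → ℝ) :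
    gam c φ = (∑ i, (c i).re * φ i) ^ 2 + (∑ i, (c i).im * φ i) ^ 2 := by
  unfold gam
  rw [Complex.sq_norm, Complex.normSq_apply, Complex.re_sum, Complex.im_sum]
  simp only [Complex.mul_re, Complex.mul_im, Complex.ofReal_re, Complex.ofReal_im, mul_zero, zero_mul, sub_zero, zero_add]
  ring

lemma key {N : ℕ} (c : Fin N → ℂ) (φstar : Fin N → ℝ)
    (hstar : ∀ i, φstar i = 1 ∨ φstar i = -1) (f : ℂ → ℝ) :
    (∑ i, f (c i) * φstar i) ^ 2 ≤ (∑ i, f (c i) * sgn (f (c i))) ^ 2 := by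
  have h1 : |∑ i, f (c i) * φstar i| ≤ ∑ i, |f (c i)| := by
    refine (Finset.abs_sum_le_sum_abs _ _).trans_eq ?_
    refine Finset.sum_congr rfl fun i _ => ?_
    rcases hstar i with h | h <;> simp [h, abs_mul]
  have h2 : (∑ i, f (c i) * sgn (f (c i))) = ∑ i, |f (c i)| :=
    Finset.sum_congr rfl fun i _ => mul_sgn _
  rw [h2]
  calc (∑ i, f (c i) * φstar i) ^ 2 = |∑ i, f (c i) * φstar i| ^ 2 := (sq_abs _).symm
    _ ≤ (∑ i, |f (c i)|) ^ 2 := by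
        apply pow_le_pow_left₀ (abs_nonneg _) h1

theorem stmt2 {N : ℕ} (c : Fin N → ℂ) (φstar : Fin N → ℝ)
    (hstar : ∀ i, φstar i = 1 ∨ φstar i = -1)
    (hmax : ∀ φ : Fin N → ℝ, (∀ i, φ i = 1 ∨ φ i = -1) → gam c φ ≤ gam c φstar) :
    gam c (phiSA c) ≥ (1 / 2) * gam c φstar := by
  have hA : (∑ i, (c i).re * φstar i) ^ 2 ≤ gam c (fun i => sgn (c i).re) := by
    rw [gam_eq]
    exact le_add_of_le_of_nonneg (key c φstar hstar Complex.re) (sq_nonneg _)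
  have hB : (∑ i, (c i).im * φstar i) ^ 2 ≤ gam c (fun i => sgn (c i).im) := by
    rw [gam_eq]
    exact le_add_of_nonneg_of_le (sq_nonneg _) (key c φstar hstar Complex.im)
  rw [gam_eq c φstar]
  unfold phiSA
  split_ifs with h <;> linarith
end

section
/- If x, y, z, w are independent real Gaussian random variables each with mean 0 and variance 1/2, then E[|xz − yw|] = 1/2. -/
open MeasureTheory ProbabilityTheory Real Set ENNReal
open scoped NNReal

theorem lintegral_comp_polarCoord_symm' (f : ℝ × ℝ → ℝ≥0∞) :
    ∫⁻ p in polarCoord.target, ENNReal.ofReal p.1 * f (polarCoord.symm p) = ∫⁻ p, f p := by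
  set B : ℝ × ℝ → ℝ × ℝ →L[ℝ] ℝ × ℝ := fun p =>
    LinearMap.toContinuousLinearMap (Matrix.toLin (Module.Basis.finTwoProd ℝ) (Module.Basis.finTwoProd ℝ)
      !![cos p.2, -p.1 * sin p.2; sin p.2, p.1 * cos p.2])
  have A : ∀ p ∈ polarCoord.target, HasFDerivWithinAt polarCoord.symm (B p) polarCoord.target p :=
    fun p _ => (hasFDerivAt_polarCoord_symm p).hasFDerivWithinAt
  have B_det : ∀ p, (B p).det = p.1 := by
    intro p
    conv_rhs => rw [← one_mul p.1, ← cos_sq_add_sin_sq p.2]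
    simp only [B, neg_mul, LinearMap.det_toContinuousLinearMap, LinearMap.det_toLin,
      Matrix.det_fin_two_of, sub_neg_eq_add]
    ring
  symm
  calc
    ∫⁻ p, f p = ∫⁻ p in polarCoord.source, f p := by
      rw [← setLIntegral_univ]
      exact setLIntegral_congr polarCoord_source_ae_eq_univ.symm
    _ = ∫⁻ p in polarCoord.symm '' polarCoord.target, f p := by
      rw [polarCoord.symm_image_target_eq_source]
    _ = ∫⁻ p in polarCoord.target, ENNReal.ofReal |(B p).det| * f (polarCoord.symm p) := by
      exact lintegral_image_eq_lintegral_abs_det_fderiv_mul volume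
        polarCoord.open_target.measurableSet A polarCoord.symm.injOn f
    _ = ∫⁻ p in polarCoord.target, ENNReal.ofReal p.1 * f (polarCoord.symm p) := by
      refine setLIntegral_congr_fun polarCoord.open_target.measurableSet ?_
      intro p hp
      dsimp only
      rw [B_det, abs_of_pos hp.1]

theorem gauss_pdf_eq' (t : ℝ) :
    gaussianPDF 0 (1/2) t = ENNReal.ofReal ((√π)⁻¹ * rexp (-t^2)) := by
  rw [gaussianPDF_def, gaussianPDFReal_def]
  have h1 : ((1/2 : ℝ≥0) : ℝ) = 1/2 := by norm_num
  rw [h1]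
  norm_num
  rw [show ENNReal.ofReal √2 * (ENNReal.ofReal (√π)⁻¹ * (ENNReal.ofReal √2)⁻¹) =
      ENNReal.ofReal (√π)⁻¹ * (ENNReal.ofReal √2 * (ENNReal.ofReal √2)⁻¹) by ring,
    ENNReal.mul_inv_cancel (by simp) ofReal_ne_top, mul_one]

theorem lintegral_gauss' (g : ℝ → ℝ≥0∞) :
    ∫⁻ t, g t ∂(gaussianReal 0 (1/2)) =
      ∫⁻ t, ENNReal.ofReal ((√π)⁻¹ * rexp (-t^2)) * g t := by
  rw [gaussianReal_of_var_ne_zero 0 (by norm_num),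
    lintegral_withDensity_eq_lintegral_mul_non_measurable _ (measurable_gaussianPDF _ _)
      (by filter_upwards with t; rw [gauss_pdf_eq']; exact ofReal_lt_top)]
  exact lintegral_congr fun t => by rw [Pi.mul_apply, gauss_pdf_eq']

theorem lintegral_gauss2' (f : ℝ × ℝ → ℝ≥0∞) (hf : Measurable f) :
    ∫⁻ p, f p ∂((gaussianReal 0 (1/2)).prod (gaussianReal 0 (1/2))) =
      ∫⁻ r in Ioi (0:ℝ), ∫⁻ θ in Ioo (-π) π,
        ENNReal.ofReal (π⁻¹ * (r * rexp (-r^2))) * f (r * cos θ, r * sin θ) := by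
  calc ∫⁻ p, f p ∂((gaussianReal 0 (1/2)).prod (gaussianReal 0 (1/2)))
      = ∫⁻ a, ∫⁻ b, f (a, b) ∂(gaussianReal 0 (1/2)) ∂(gaussianReal 0 (1/2)) :=
        lintegral_prod f hf.aemeasurable
    _ = ∫⁻ a, ENNReal.ofReal ((√π)⁻¹ * rexp (-a^2)) *
          ∫⁻ b, ENNReal.ofReal ((√π)⁻¹ * rexp (-b^2)) * f (a, b) ∂volume ∂volume := by
        rw [lintegral_gauss']
        exact lintegral_congr fun a => by rw [lintegral_gauss']
    _ = ∫⁻ a, ∫⁻ b, ENNReal.ofReal ((√π)⁻¹ * rexp (-a^2)) *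
          (ENNReal.ofReal ((√π)⁻¹ * rexp (-b^2)) * f (a, b)) ∂volume ∂volume :=
        lintegral_congr fun a => (lintegral_const_mul' _ _ ofReal_ne_top).symm
    _ = ∫⁻ p : ℝ × ℝ, ENNReal.ofReal ((√π)⁻¹ * rexp (-p.1^2)) *
          (ENNReal.ofReal ((√π)⁻¹ * rexp (-p.2^2)) * f p) := by
        rw [MeasureTheory.Measure.volume_eq_prod]
        have hm : Measurable fun p : ℝ × ℝ => ENNReal.ofReal ((√π)⁻¹ * rexp (-p.1^2)) *
            (ENNReal.ofReal ((√π)⁻¹ * rexp (-p.2^2)) * f p) := by fun_prop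
        exact (lintegral_prod _ hm.aemeasurable).symm
    _ = ∫⁻ p : ℝ × ℝ, ENNReal.ofReal (π⁻¹ * rexp (-(p.1^2 + p.2^2))) * f p := by
        refine lintegral_congr fun p => ?_
        rw [← mul_assoc, ← ENNReal.ofReal_mul (by positivity)]
        congr 1
        have hs : ((√π) * (√π))⁻¹ = π⁻¹ := by rw [Real.mul_self_sqrt pi_pos.le]
        rw [neg_add, Real.exp_add, ← hs]
        ring
    _ = ∫⁻ p in polarCoord.target, ENNReal.ofReal p.1 *
          (ENNReal.ofReal (π⁻¹ * rexp (-((p.1 * cos p.2)^2 + (p.1 * sin p.2)^2))) *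
            f (p.1 * cos p.2, p.1 * sin p.2)) :=
        (lintegral_comp_polarCoord_symm' _).symm
    _ = ∫⁻ r in Ioi (0:ℝ), ∫⁻ θ in Ioo (-π) π,
        ENNReal.ofReal (π⁻¹ * (r * rexp (-r^2))) * f (r * cos θ, r * sin θ) := by
        have htarget : polarCoord.target = Ioi (0:ℝ) ×ˢ Ioo (-π) π := rfl
        rw [htarget, MeasureTheory.Measure.volume_eq_prod, ← Measure.prod_restrict,
          lintegral_prod _ (by fun_prop)]
        refine setLIntegral_congr_fun measurableSet_Ioi ?_
        intro r hr
        refine lintegral_congr fun θ => ?_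
        have hrc : (r * cos θ)^2 + (r * sin θ)^2 = r^2 := by
          have h1 : (r * cos θ)^2 + (r * sin θ)^2 = r^2 * ((cos θ)^2 + (sin θ)^2) := by ring
          rw [h1, cos_sq_add_sin_sq, mul_one]
        rw [hrc, ← mul_assoc, ← ENNReal.ofReal_mul (le_of_lt hr), mul_left_comm]

theorem S1' : ∫⁻ s in Ioi (0:ℝ), ENNReal.ofReal (s^2 * rexp (-s^2)) = ENNReal.ofReal (√π/4) := by
  have hint : IntegrableOn (fun s : ℝ => s^2 * rexp (-s^2)) (Ioi 0) := by
    have := integrableOn_rpow_mul_exp_neg_mul_sq (b := 1) one_pos (s := 2) (by norm_num)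
    simpa [Real.rpow_natCast] using this
  rw [← ofReal_integral_eq_lintegral_ofReal hint]
  · congr 1
    have h := integral_rpow_mul_exp_neg_rpow (p := 2) (q := 2) two_pos (by norm_num)
    have h2 : ∀ x : ℝ, x ^ (2:ℝ) = x ^ 2 := fun x => by
      rw [show (2:ℝ) = ((2:ℕ):ℝ) by norm_num, Real.rpow_natCast]
    simp_rw [h2] at h
    rw [h, show (2+1:ℝ)/2 = 1/2 + 1 by norm_num, Real.Gamma_add_one (by norm_num),
      Real.Gamma_one_half_eq]
    ring
  · filter_upwards with s
    positivity

theorem S2' (θ : ℝ) : ∫⁻ φ in Ioo (-π) π, ENNReal.ofReal |cos (θ+φ)| = ENNReal.ofReal 4 := by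
  have hcont : Continuous fun φ : ℝ => |cos (θ+φ)| :=
    (continuous_cos.comp (continuous_const.add continuous_id)).abs
  have hint : IntegrableOn (fun φ : ℝ => |cos (θ+φ)|) (Ioo (-π) π) :=
    (hcont.integrableOn_Icc).mono_set Ioo_subset_Icc_self
  rw [← ofReal_integral_eq_lintegral_ofReal hint (by filter_upwards with s using abs_nonneg _)]
  congr 1
  have habs : Function.Periodic (fun u : ℝ => |cos u|) π := fun u => by
    simp [Real.cos_add_pi]
  have key : ∀ a : ℝ, ∫ u in a..(a+π), |cos u| = 2 := by
    intro a
    rw [habs.intervalIntegral_add_eq a (-(π/2))]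
    have : ∫ u in (-(π/2))..(-(π/2)+π), |cos u| = ∫ u in (-(π/2))..(-(π/2)+π), cos u := by
      refine intervalIntegral.integral_congr fun u hu => ?_
      rw [uIcc_of_le (by linarith [pi_pos]), show -(π/2)+π = π/2 by ring] at hu
      exact abs_of_nonneg (Real.cos_nonneg_of_mem_Icc hu)
    rw [this, integral_cos]
    rw [show -(π/2)+π = π/2 by ring]
    simp [Real.sin_pi_div_two]
    norm_num
  have hIoo : ∫ φ in Ioo (-π) π, |cos (θ+φ)| = ∫ φ in (-π)..π, |cos (θ+φ)| := by
    rw [intervalIntegral.integral_of_le (by linarith [pi_pos]), integral_Ioc_eq_integral_Ioo]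
  rw [hIoo]
  have hshift : ∫ φ in (-π)..π, |cos (θ+φ)| = ∫ u in (θ + -π)..(θ+π), |cos u| :=
    intervalIntegral.integral_comp_add_left (fun u => |cos u|) θ
  have hii : ∀ a b : ℝ, IntervalIntegrable (fun u : ℝ => |cos u|) volume a b :=
    fun a b => continuous_cos.abs.intervalIntegrable a b
  have k1 := key (θ + -π)
  rw [show θ + -π + π = θ by ring] at k1
  rw [hshift, ← intervalIntegral.integral_add_adjacent_intervals (b := θ) (hii _ _) (hii _ _),
    k1, key]
  norm_num

theorem inner_calc (r θ : ℝ) :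
    ∫⁻ b, ENNReal.ofReal |(r * cos θ) * b.1 - (r * sin θ) * b.2|
        ∂((gaussianReal 0 (1/2)).prod (gaussianReal 0 (1/2))) =
      ENNReal.ofReal (√π * π⁻¹ * |r|) := by
  rw [lintegral_gauss2' _ (by fun_prop)]
  have step1 : ∀ s : ℝ, ∫⁻ φ in Ioo (-π) π,
      ENNReal.ofReal (π⁻¹ * (s * rexp (-s^2))) *
        ENNReal.ofReal |(r * cos θ) * (s * cos φ) - (r * sin θ) * (s * sin φ)| =
      ENNReal.ofReal (π⁻¹ * (s * rexp (-s^2))) * (ENNReal.ofReal (|r| * |s|) *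
        ENNReal.ofReal 4) := by
    intro s
    have habs : ∀ φ : ℝ, |(r * cos θ) * (s * cos φ) - (r * sin θ) * (s * sin φ)| =
        |r| * |s| * |cos (θ + φ)| := by
      intro φ
      rw [show (r * cos θ) * (s * cos φ) - (r * sin θ) * (s * sin φ)
          = (r * s) * (cos θ * cos φ - sin θ * sin φ) by ring, ← Real.cos_add, abs_mul, abs_mul]
    calc ∫⁻ φ in Ioo (-π) π, ENNReal.ofReal (π⁻¹ * (s * rexp (-s^2))) *
          ENNReal.ofReal |(r * cos θ) * (s * cos φ) - (r * sin θ) * (s * sin φ)|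
        = ∫⁻ φ in Ioo (-π) π, ENNReal.ofReal (π⁻¹ * (s * rexp (-s^2))) *
            (ENNReal.ofReal (|r| * |s|) * ENNReal.ofReal |cos (θ + φ)|) := by
          refine lintegral_congr fun φ => ?_
          rw [habs φ, ENNReal.ofReal_mul (by positivity : (0:ℝ) ≤ |r| * |s|)]
      _ = ENNReal.ofReal (π⁻¹ * (s * rexp (-s^2))) * (ENNReal.ofReal (|r| * |s|) *
            ∫⁻ φ in Ioo (-π) π, ENNReal.ofReal |cos (θ + φ)|) := by
          rw [lintegral_const_mul' _ _ ofReal_ne_top, lintegral_const_mul' _ _ ofReal_ne_top]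
      _ = _ := by rw [S2' θ]
  simp_rw [step1]
  calc ∫⁻ s in Ioi (0:ℝ), ENNReal.ofReal (π⁻¹ * (s * rexp (-s^2))) *
        (ENNReal.ofReal (|r| * |s|) * ENNReal.ofReal 4)
      = ∫⁻ s in Ioi (0:ℝ), ENNReal.ofReal (4 * π⁻¹ * |r|) * ENNReal.ofReal (s^2 * rexp (-s^2)) := by
        refine setLIntegral_congr_fun measurableSet_Ioi ?_
        intro s hs
        dsimp only
        rw [← ENNReal.ofReal_mul (by positivity : (0:ℝ) ≤ |r| * |s|),
          ← ENNReal.ofReal_mul (by have hs' := mem_Ioi.mp hs; positivity : (0:ℝ) ≤ π⁻¹ * (s * rexp (-s^2))),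
          ← ENNReal.ofReal_mul (by positivity : (0:ℝ) ≤ 4 * π⁻¹ * |r|)]
        congr 1
        rw [abs_of_pos (mem_Ioi.mp hs)]
        ring
    _ = ENNReal.ofReal (4 * π⁻¹ * |r|) * ENNReal.ofReal (√π/4) := by
        rw [lintegral_const_mul' _ _ ofReal_ne_top, S1']
    _ = ENNReal.ofReal (√π * π⁻¹ * |r|) := by
        rw [← ENNReal.ofReal_mul (by positivity)]
        congr 1
        ring

theorem stmt4 {Ω : Type*} [MeasurableSpace Ω] (μ : Measure Ω) [IsProbabilityMeasure μ]
    (x y z w : Ω → ℝ)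
    (hmeas : ∀ f ∈ ({x, y, z, w} : Set (Ω → ℝ)), Measurable f)
    (hindep : iIndepFun ![x, y, z, w] μ)
    (hx : μ.map x = gaussianReal 0 (1/2)) (hy : μ.map y = gaussianReal 0 (1/2))
    (hz : μ.map z = gaussianReal 0 (1/2)) (hw : μ.map w = gaussianReal 0 (1/2)) :
    ∫ ω, |x ω * z ω - y ω * w ω| ∂μ = 1 / 2 := by
  have hmx : Measurable x := hmeas x (by simp)
  have hmy : Measurable y := hmeas y (by simp)
  have hmz : Measurable z := hmeas z (by simp)
  have hmw : Measurable w := hmeas w (by simp)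
  set ν : Measure (ℝ × ℝ) := (gaussianReal 0 (1/2)).prod (gaussianReal 0 (1/2)) with hν
  have hind : ∀ i, Measurable (![x, y, z, w] i) := by
    intro i; fin_cases i <;> assumption
  have hAB : IndepFun (fun ω => (x ω, y ω)) (fun ω => (z ω, w ω)) μ := by
    have := hindep.indepFun_prodMk_prodMk hind 0 1 2 3
      (by decide) (by decide) (by decide) (by decide)
    simpa using this
  have hxy : IndepFun x y μ := by
    have := hindep.indepFun (show (0 : Fin 4) ≠ 1 by decide); simpa using this
  have hzw : IndepFun z w μ := by
    have := hindep.indepFun (show (2 : Fin 4) ≠ 3 by decide); simpa using this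
  have hmapxy : μ.map (fun ω => (x ω, y ω)) = ν := by
    rw [(indepFun_iff_map_prod_eq_prod_map_map hmx.aemeasurable hmy.aemeasurable).mp hxy, hx, hy]
  have hmapzw : μ.map (fun ω => (z ω, w ω)) = ν := by
    rw [(indepFun_iff_map_prod_eq_prod_map_map hmz.aemeasurable hmw.aemeasurable).mp hzw, hz, hw]
  have hmap : μ.map (fun ω => ((x ω, y ω), (z ω, w ω))) = ν.prod ν := by
    rw [(indepFun_iff_map_prod_eq_prod_map_map ((hmx.prodMk hmy).aemeasurable)
      ((hmz.prodMk hmw).aemeasurable)).mp hAB, hmapxy, hmapzw]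
  have hcont : Continuous fun p : (ℝ × ℝ) × (ℝ × ℝ) => |p.1.1 * p.2.1 - p.1.2 * p.2.2| := by
    fun_prop
  have hstep : ∫ ω, |x ω * z ω - y ω * w ω| ∂μ
      = ∫ p : (ℝ × ℝ) × (ℝ × ℝ), |p.1.1 * p.2.1 - p.1.2 * p.2.2| ∂(ν.prod ν) := by
    rw [← hmap, integral_map (((hmx.prodMk hmy).prodMk (hmz.prodMk hmw)).aemeasurable)
      hcont.aestronglyMeasurable]
  rw [hstep, MeasureTheory.integral_eq_lintegral_of_nonneg_ae
      (Filter.Eventually.of_forall fun p => abs_nonneg _) hcont.aestronglyMeasurable]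
  have hmF : Measurable fun p : (ℝ × ℝ) × (ℝ × ℝ) =>
      ENNReal.ofReal |p.1.1 * p.2.1 - p.1.2 * p.2.2| := by fun_prop
  have hL : ∫⁻ p : (ℝ × ℝ) × (ℝ × ℝ), ENNReal.ofReal |p.1.1 * p.2.1 - p.1.2 * p.2.2| ∂(ν.prod ν)
      = ENNReal.ofReal (1/2) := by
    rw [lintegral_prod _ hmF.aemeasurable]
    have hF : Measurable fun a : ℝ × ℝ =>
        ∫⁻ b : ℝ × ℝ, ENNReal.ofReal |a.1 * b.1 - a.2 * b.2| ∂ν :=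
      Measurable.lintegral_prod_right (by fun_prop)
    rw [lintegral_gauss2' _ hF]
    calc ∫⁻ r in Ioi (0:ℝ), ∫⁻ θ in Ioo (-π) π, ENNReal.ofReal (π⁻¹ * (r * rexp (-r^2))) *
          ∫⁻ b : ℝ × ℝ, ENNReal.ofReal |(r * cos θ) * b.1 - (r * sin θ) * b.2| ∂ν
        = ∫⁻ r in Ioi (0:ℝ), ∫⁻ θ in Ioo (-π) π, ENNReal.ofReal (π⁻¹ * (r * rexp (-r^2))) *
            ENNReal.ofReal (√π * π⁻¹ * |r|) :=
          lintegral_congr fun r => lintegral_congr fun θ => by rw [inner_calc]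
      _ = ∫⁻ r in Ioi (0:ℝ), (ENNReal.ofReal (π⁻¹ * (r * rexp (-r^2))) *
            ENNReal.ofReal (√π * π⁻¹ * |r|)) * ENNReal.ofReal (2 * π) := by
          refine lintegral_congr fun r => ?_
          rw [setLIntegral_const, Real.volume_Ioo, show π - -π = 2 * π by ring]
      _ = ∫⁻ r in Ioi (0:ℝ), ENNReal.ofReal (2 * √π * π⁻¹) *
            ENNReal.ofReal (r^2 * rexp (-r^2)) := by
          refine setLIntegral_congr_fun measurableSet_Ioi ?_
          intro r hr
          dsimp only
          have hr' := mem_Ioi.mp hr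
          rw [← ENNReal.ofReal_mul (by positivity : (0:ℝ) ≤ π⁻¹ * (r * rexp (-r^2))),
            ← ENNReal.ofReal_mul (by positivity :
              (0:ℝ) ≤ π⁻¹ * (r * rexp (-r^2)) * (√π * π⁻¹ * |r|)),
            ← ENNReal.ofReal_mul (by positivity : (0:ℝ) ≤ 2 * √π * π⁻¹)]
          congr 1
          rw [abs_of_pos hr']
          field_simp
      _ = ENNReal.ofReal (2 * √π * π⁻¹) * ENNReal.ofReal (√π/4) := by
          rw [lintegral_const_mul' _ _ ofReal_ne_top, S1']
      _ = ENNReal.ofReal (1/2) := by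
          rw [← ENNReal.ofReal_mul (by positivity)]
          congr 1
          rw [show 2 * √π * π⁻¹ * (√π/4) = (√π * √π) * π⁻¹ / 2 by ring,
            Real.mul_self_sqrt pi_pos.le, mul_inv_cancel₀ pi_pos.ne']
  rw [hL, ENNReal.toReal_ofReal (by norm_num)]
end

section
/- Under i.i.d. circularly symmetric complex Gaussian channels h_i, g_i ~ CN(0,1) (i = 1,…,N) with c_i = h_i · conj(g_i), the expected sign-alignment SNR satisfies E[γ(φ^SA)] ≥ E[(Σᵢ |Re(cᵢ)|)²] ≥ (Σᵢ E[|Re(cᵢ)|])² = N²/4. -/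
section SA_helpers

open MeasureTheory Real Set Filter ProbabilityTheory intervalIntegral
open scoped NNReal ENNReal

-- ∫ r in Ioi 0, r^2 exp(-r²) = √π/4
lemma R2 : ∫ r in Ioi (0:ℝ), r ^ 2 * Real.exp (-r ^ 2) = Real.sqrt π / 4 := by
  have hint : Integrable (fun x : ℝ => x ^ 2 * Real.exp (-x ^ 2)) := by
    have := integrable_rpow_mul_exp_neg_mul_sq (b := 1) one_pos (s := 2) (by norm_num)
    have h2 : ∀ x : ℝ, x ^ (2:ℝ) = x ^ (2:ℕ) := fun x => by
      rw [show (2:ℝ) = ((2:ℕ):ℝ) by norm_num, Real.rpow_natCast]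
    simpa [h2, neg_mul, one_mul] using this
  have hexp : Integrable (fun x : ℝ => Real.exp (-x ^ 2)) := by
    simpa [neg_mul, one_mul] using integrable_exp_neg_mul_sq (b := 1) one_pos
  have hderiv : ∀ x ∈ Ioi (0:ℝ), HasDerivAt (fun r : ℝ => -(1/2) * (r * Real.exp (-r ^ 2)))
      (x ^ 2 * Real.exp (-x ^ 2) - (1/2) * Real.exp (-x ^ 2)) x := by
    intro x _
    have h1 : HasDerivAt (fun r : ℝ => -r ^ 2) (-(2 * x)) x := by
      exact (by simpa using (hasDerivAt_pow 2 x).neg : HasDerivAt (-fun r : ℝ => r ^ 2) (-(2 * x)) x)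
    have h2 : HasDerivAt (fun r : ℝ => Real.exp (-r ^ 2)) (Real.exp (-x ^ 2) * (-(2 * x))) x :=
      h1.exp
    have h3 : HasDerivAt (fun r : ℝ => r * Real.exp (-r ^ 2))
        (1 * Real.exp (-x ^ 2) + x * (Real.exp (-x ^ 2) * (-(2 * x)))) x :=
      (hasDerivAt_id x).mul h2
    have h4 := h3.const_mul (-(1/2 : ℝ))
    refine h4.congr_deriv ?_
    ring
  have htend : Tendsto (fun r : ℝ => -(1/2) * (r * Real.exp (-r ^ 2))) atTop (nhds 0) := by
    have hb : Tendsto (fun r : ℝ => r * Real.exp (-r)) atTop (nhds 0) := by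
      simpa using tendsto_pow_mul_exp_neg_atTop_nhds_zero 1
    have h0 : Tendsto (fun r : ℝ => r * Real.exp (-r ^ 2)) atTop (nhds 0) := by
      apply tendsto_of_tendsto_of_tendsto_of_le_of_le' tendsto_const_nhds hb
      · filter_upwards [eventually_ge_atTop (0:ℝ)] with r hr
        positivity
      · filter_upwards [eventually_ge_atTop (1:ℝ)] with r hr
        have : Real.exp (-r ^ 2) ≤ Real.exp (-r) := by
          apply Real.exp_le_exp.2; nlinarith
        nlinarith [Real.exp_pos (-r^2)]
    simpa using h0.const_mul (-(1/2 : ℝ))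
  have key := integral_Ioi_of_hasDerivAt_of_tendsto
    (by fun_prop : Continuous fun r : ℝ => -(1/2) * (r * Real.exp (-r ^ 2))).continuousWithinAt
    hderiv ((hint.sub (hexp.const_mul _)).integrableOn) htend
  have hsplit : ∫ x in Ioi (0:ℝ), (x ^ 2 * Real.exp (-x ^ 2) - (1/2) * Real.exp (-x ^ 2))
      = (∫ x in Ioi (0:ℝ), x ^ 2 * Real.exp (-x ^ 2)) - (1/2) * ∫ x in Ioi (0:ℝ), Real.exp (-x ^ 2) := by
    rw [integral_sub hint.integrableOn ((hexp.const_mul _).integrableOn), MeasureTheory.integral_const_mul]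
  have hg : ∫ x in Ioi (0:ℝ), Real.exp (-x ^ 2) = Real.sqrt π / 2 := by
    simpa [neg_mul, one_mul] using integral_gaussian_Ioi 1
  rw [hsplit, hg] at key
  norm_num at key ⊢
  nlinarith [Real.sq_sqrt (le_of_lt Real.pi_pos), Real.sqrt_nonneg π, key]

lemma C4 : ∫ x in (-π)..π, |Real.cos x| = 4 := by
  have hi : ∀ a b : ℝ, IntervalIntegrable (fun x => |Real.cos x|) volume a b :=
    fun a b => (Real.continuous_cos.abs).intervalIntegrable a b
  have h1 : ∫ x in (-π)..(-(π/2)), |Real.cos x| = 1 := by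
    rw [integral_congr (g := fun x => -Real.cos x)]
    · rw [intervalIntegral.integral_neg, integral_cos]
      simp [Real.sin_pi_div_two]
    · intro x hx
      rw [uIcc_of_le (by linarith [pi_pos])] at hx
      have : Real.cos x ≤ 0 := by
        rw [← Real.cos_neg]
        exact Real.cos_nonpos_of_pi_div_two_le_of_le (by linarith [hx.2])
          (by linarith [hx.1, hx.2, pi_pos])
      simpa using abs_of_nonpos this
  have h2 : ∫ x in (-(π/2))..(π/2), |Real.cos x| = 2 := by
    rw [integral_congr (g := fun x => Real.cos x)]
    · rw [integral_cos]; simp [Real.sin_pi_div_two]; ring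
    · intro x hx
      rw [uIcc_of_le (by linarith [pi_pos])] at hx
      exact abs_of_nonneg (Real.cos_nonneg_of_mem_Icc hx)
  have h3 : ∫ x in (π/2)..π, |Real.cos x| = 1 := by
    rw [integral_congr (g := fun x => -Real.cos x)]
    · rw [intervalIntegral.integral_neg, integral_cos]
      simp [Real.sin_pi_div_two]
    · intro x hx
      rw [uIcc_of_le (by linarith [pi_pos])] at hx
      exact abs_of_nonpos (Real.cos_nonpos_of_pi_div_two_le_of_le hx.1
        (by linarith [hx.1, hx.2, pi_pos]))
  have e12 := integral_add_adjacent_intervals (hi (-π) (-(π/2))) (hi (-(π/2)) (π/2))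
  have h12 : ∫ x in (-π)..(π/2), |Real.cos x| = 3 := by
    rw [← e12, h1, h2]; norm_num
  have e123 := integral_add_adjacent_intervals (hi (-π) (π/2)) (hi (π/2) π)
  rw [← e123, h12, h3]; norm_num

lemma Tri (a b : ℝ) : ∫ θ in Ioo (-π) π, |a * Real.cos θ - b * Real.sin θ| =
    4 * Real.sqrt (a ^ 2 + b ^ 2) := by
  have hIoo : ∫ θ in Ioo (-π) π, |a * Real.cos θ - b * Real.sin θ| =
      ∫ θ in (-π)..π, |a * Real.cos θ - b * Real.sin θ| := by
    rw [intervalIntegral.integral_of_le (by linarith [pi_pos]), integral_Ioc_eq_integral_Ioo]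
  rw [hIoo]
  by_cases hz : a = 0 ∧ b = 0
  · simp [hz.1, hz.2]
  · set z : ℂ := ⟨a, b⟩ with hzdef
    have hz0 : z ≠ 0 := by
      simp only [ne_eq, Complex.ext_iff, Complex.zero_re, Complex.zero_im]
      tauto
    set R := ‖z‖ with hR
    have hRpos : 0 < R := norm_pos_iff.mpr hz0
    have hRval : R = Real.sqrt (a ^ 2 + b ^ 2) := by
      rw [hR, Complex.norm_def, Complex.normSq_mk]; ring_nf
    have hca : Real.cos z.arg = a / R := by simpa using Complex.cos_arg hz0
    have hsa : Real.sin z.arg = b / R := by simpa using Complex.sin_arg z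
    have ha : a = R * Real.cos z.arg := by rw [hca, mul_div_assoc', mul_div_cancel_left₀ a hRpos.ne']
    have hb : b = R * Real.sin z.arg := by rw [hsa, mul_div_assoc', mul_div_cancel_left₀ b hRpos.ne']
    have hcongr : ∀ θ : ℝ, |a * Real.cos θ - b * Real.sin θ| = R * |Real.cos (θ + z.arg)| := by
      intro θ
      have h : a * Real.cos θ - b * Real.sin θ = R * Real.cos (θ + z.arg) := by
        rw [Real.cos_add, ha, hb]; ring
      rw [h, abs_mul, abs_of_pos hRpos]
    rw [integral_congr (fun x _ => hcongr x), intervalIntegral.integral_const_mul]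
    have hshift : ∫ θ in (-π)..π, |Real.cos (θ + z.arg)| =
        ∫ θ in (-π + z.arg)..(π + z.arg), |Real.cos θ| :=
      intervalIntegral.integral_comp_add_right (fun θ => |Real.cos θ|) z.arg
    have hper : Function.Periodic (fun x : ℝ => |Real.cos x|) (2 * π) := fun x => by
      simp [Real.cos_periodic x]
    have hp := hper.intervalIntegral_add_eq (-π + z.arg) (-π)
    have h2pi : -π + z.arg + 2 * π = π + z.arg := by ring
    have h2pi' : -π + 2 * π = π := by ring
    rw [h2pi, h2pi'] at hp
    rw [hshift, hp, C4, hRval]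
    ring

lemma KL (a b : ℝ) : ∫ q : ℝ × ℝ, |a * q.1 - b * q.2| * Real.exp (-(q.1 ^ 2 + q.2 ^ 2)) =
    Real.sqrt π * Real.sqrt (a ^ 2 + b ^ 2) := by
  rw [← integral_comp_polarCoord_symm
    (fun q : ℝ × ℝ => |a * q.1 - b * q.2| * Real.exp (-(q.1 ^ 2 + q.2 ^ 2)))]
  rw [polarCoord_target]
  have hcongr : ∀ p ∈ (Ioi (0:ℝ)) ×ˢ (Ioo (-π) π),
      p.1 • (|a * (polarCoord.symm p).1 - b * (polarCoord.symm p).2| *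
        Real.exp (-((polarCoord.symm p).1 ^ 2 + (polarCoord.symm p).2 ^ 2))) =
      (p.1 ^ 2 * Real.exp (-p.1 ^ 2)) * |a * Real.cos p.2 - b * Real.sin p.2| := by
    rintro ⟨r, θ⟩ ⟨hr, hθ⟩
    simp only [polarCoord_symm_apply]
    have h1 : (r * Real.cos θ) ^ 2 + (r * Real.sin θ) ^ 2 = r ^ 2 := by
      have := Real.sin_sq_add_cos_sq θ; nlinarith
    have h2 : |a * (r * Real.cos θ) - b * (r * Real.sin θ)| =
        r * |a * Real.cos θ - b * Real.sin θ| := by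
      rw [show a * (r * Real.cos θ) - b * (r * Real.sin θ) =
        r * (a * Real.cos θ - b * Real.sin θ) by ring, abs_mul,
        abs_of_pos (mem_Ioi.mp hr)]
    rw [h1, h2]
    simp only [smul_eq_mul]
    ring
  rw [setIntegral_congr_fun (measurableSet_Ioi.prod measurableSet_Ioo) hcongr]
  rw [Measure.volume_eq_prod, ← Measure.prod_restrict,
    integral_prod_mul (fun r : ℝ => r ^ 2 * Real.exp (-r ^ 2))
      (fun θ : ℝ => |a * Real.cos θ - b * Real.sin θ|)]
  rw [R2, Tri a b]
  ring

lemma KL2 : ∫ q : ℝ × ℝ, Real.sqrt (q.1 ^ 2 + q.2 ^ 2) * Real.exp (-(q.1 ^ 2 + q.2 ^ 2)) =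
    π * Real.sqrt π / 2 := by
  rw [← integral_comp_polarCoord_symm
    (fun q : ℝ × ℝ => Real.sqrt (q.1 ^ 2 + q.2 ^ 2) * Real.exp (-(q.1 ^ 2 + q.2 ^ 2)))]
  rw [polarCoord_target]
  have hcongr : ∀ p ∈ (Ioi (0:ℝ)) ×ˢ (Ioo (-π) π),
      p.1 • (Real.sqrt ((polarCoord.symm p).1 ^ 2 + (polarCoord.symm p).2 ^ 2) *
        Real.exp (-((polarCoord.symm p).1 ^ 2 + (polarCoord.symm p).2 ^ 2))) =
      (p.1 ^ 2 * Real.exp (-p.1 ^ 2)) * (1 : ℝ) := by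
    rintro ⟨r, θ⟩ ⟨hr, hθ⟩
    simp only [polarCoord_symm_apply]
    have h1 : (r * Real.cos θ) ^ 2 + (r * Real.sin θ) ^ 2 = r ^ 2 := by
      have := Real.sin_sq_add_cos_sq θ; nlinarith
    rw [h1, Real.sqrt_sq (le_of_lt (mem_Ioi.mp hr))]
    simp only [smul_eq_mul]
    ring
  rw [setIntegral_congr_fun (measurableSet_Ioi.prod measurableSet_Ioo) hcongr]
  rw [Measure.volume_eq_prod, ← Measure.prod_restrict,
    integral_prod_mul (fun r : ℝ => r ^ 2 * Real.exp (-r ^ 2)) (fun _ : ℝ => (1:ℝ))]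
  rw [R2]
  simp [Real.volume_Ioo]
  rw [max_eq_left (by linarith [pi_pos])]
  ring

noncomputable def gw (x : ℝ) : ℝ := (Real.sqrt π)⁻¹ * Real.exp (-x ^ 2)

lemma gw_nonneg (x : ℝ) : 0 ≤ gw x := by
  unfold gw; positivity

lemma gw_meas : Measurable gw := by unfold gw; fun_prop

lemma gauss_eq : gaussianReal 0 (1/2) = volume.withDensity (fun x => ENNReal.ofReal (gw x)) := by
  rw [gaussianReal_of_var_ne_zero 0 (by norm_num)]
  congr 1
  funext x
  rw [gaussianPDF]
  congr 1
  rw [gaussianPDFReal]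
  unfold gw
  have h1 : (2 : ℝ) * π * ((1/2 : ℝ≥0) : ℝ) = π := by push_cast; ring
  have h2 : -(x - 0) ^ 2 / (2 * ((1/2 : ℝ≥0) : ℝ)) = -x ^ 2 := by push_cast; ring
  rw [h1, h2]

lemma gauss2_eq : (gaussianReal 0 (1/2)).prod (gaussianReal 0 (1/2)) =
    (volume : Measure (ℝ × ℝ)).withDensity (fun p => ENNReal.ofReal (gw p.1 * gw p.2)) := by
  refine Measure.prod_eq fun s t hs ht => ?_
  rw [withDensity_apply _ (hs.prod ht)]
  have : ∀ p : ℝ × ℝ, ENNReal.ofReal (gw p.1 * gw p.2)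
      = ENNReal.ofReal (gw p.1) * ENNReal.ofReal (gw p.2) := fun p =>
    ENNReal.ofReal_mul (gw_nonneg _)
  simp_rw [this]
  rw [Measure.volume_eq_prod, ← Measure.prod_restrict]
  rw [MeasureTheory.lintegral_prod_mul (f := fun x => ENNReal.ofReal (gw x))
    (g := fun x => ENNReal.ofReal (gw x)) ((ENNReal.measurable_ofReal.comp gw_meas).aemeasurable) ((ENNReal.measurable_ofReal.comp gw_meas).aemeasurable)]
  rw [gauss_eq, withDensity_apply _ hs, withDensity_apply _ ht]

lemma integral_gauss2 (f : ℝ × ℝ → ℝ) :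
    ∫ p, f p ∂((gaussianReal 0 (1/2)).prod (gaussianReal 0 (1/2))) =
    ∫ p : ℝ × ℝ, (gw p.1 * gw p.2) * f p := by
  rw [gauss2_eq]
  have : (fun p : ℝ × ℝ => ENNReal.ofReal (gw p.1 * gw p.2)) =
      (fun p : ℝ × ℝ => ((Real.toNNReal (gw p.1 * gw p.2) : ℝ≥0) : ℝ≥0∞)) := rfl
  rw [this, integral_withDensity_eq_integral_smul (f := fun p : ℝ × ℝ => Real.toNNReal (gw p.1 * gw p.2)) (by exact ((gw_meas.comp measurable_fst).mul (gw_meas.comp measurable_snd)).real_toNNReal) f]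
  congr 1
  funext p
  rw [NNReal.smul_def, smul_eq_mul, Real.coe_toNNReal _ (mul_nonneg (gw_nonneg _) (gw_nonneg _))]

lemma gw_mul (x y : ℝ) : gw x * gw y = π⁻¹ * Real.exp (-(x ^ 2 + y ^ 2)) := by
  unfold gw
  have h : (Real.sqrt π)⁻¹ * Real.exp (-x ^ 2) * ((Real.sqrt π)⁻¹ * Real.exp (-y ^ 2))
      = ((Real.sqrt π) * (Real.sqrt π))⁻¹ * (Real.exp (-x ^ 2) * Real.exp (-y ^ 2)) := by
    rw [mul_inv]; ring
  rw [h, Real.mul_self_sqrt Real.pi_pos.le, ← Real.exp_add]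
  ring_nf

lemma IL (a b : ℝ) : ∫ q, |a * q.1 - b * q.2|
      ∂((gaussianReal 0 (1/2)).prod (gaussianReal 0 (1/2))) =
    Real.sqrt (a ^ 2 + b ^ 2) / Real.sqrt π := by
  rw [integral_gauss2]
  have : ∀ q : ℝ × ℝ, (gw q.1 * gw q.2) * |a * q.1 - b * q.2| =
      π⁻¹ * (|a * q.1 - b * q.2| * Real.exp (-(q.1 ^ 2 + q.2 ^ 2))) := by
    intro q; rw [gw_mul]; ring
  simp_rw [this]
  rw [MeasureTheory.integral_const_mul, KL]
  have hππ : Real.sqrt π * Real.sqrt π = π := Real.mul_self_sqrt Real.pi_pos.le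
  have hπ0 : Real.sqrt π ≠ 0 := by positivity
  field_simp
  nlinarith [Real.sqrt_nonneg (a ^ 2 + b ^ 2)]

lemma OL : ∫ p, Real.sqrt (p.1 ^ 2 + p.2 ^ 2)
      ∂((gaussianReal 0 (1/2)).prod (gaussianReal 0 (1/2))) = Real.sqrt π / 2 := by
  rw [integral_gauss2]
  have : ∀ q : ℝ × ℝ, (gw q.1 * gw q.2) * Real.sqrt (q.1 ^ 2 + q.2 ^ 2) =
      π⁻¹ * (Real.sqrt (q.1 ^ 2 + q.2 ^ 2) * Real.exp (-(q.1 ^ 2 + q.2 ^ 2))) := by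
    intro q; rw [gw_mul]; ring
  simp_rw [this]
  rw [MeasureTheory.integral_const_mul, KL2]
  field_simp

lemma integrable_gauss1_iff (f : ℝ → ℝ) :
    Integrable f (gaussianReal 0 (1/2)) ↔ Integrable (fun x => f x * gw x) volume := by
  rw [gauss_eq, integrable_withDensity_iff (f := fun x => ENNReal.ofReal (gw x))
    (by exact ENNReal.measurable_ofReal.comp gw_meas)
    (ae_of_all _ fun x => ENNReal.ofReal_lt_top)]
  simp_rw [ENNReal.toReal_ofReal (gw_nonneg _)]

lemma Igf : Integrable (fun x : ℝ => x ^ 2) (gaussianReal 0 (1/2)) := by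
  rw [integrable_gauss1_iff]
  have base : Integrable (fun x : ℝ => x ^ 2 * Real.exp (-x ^ 2)) := by
    have := integrable_rpow_mul_exp_neg_mul_sq (b := 1) one_pos (s := 2) (by norm_num)
    have h2 : ∀ x : ℝ, x ^ (2:ℝ) = x ^ (2:ℕ) := fun x => by
      rw [show (2:ℝ) = ((2:ℕ):ℝ) by norm_num, Real.rpow_natCast]
    simpa [h2, neg_mul, one_mul] using this
  have : (fun x : ℝ => x ^ 2 * gw x) = fun x => (Real.sqrt π)⁻¹ * (x ^ 2 * Real.exp (-x ^ 2)) := by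
    funext x; unfold gw; ring
  rw [this]
  exact base.const_mul _

lemma int_comp_fst {α β : Type*} [MeasurableSpace α] [MeasurableSpace β] {P : Measure α}
    {Q : Measure β} [IsProbabilityMeasure P] [IsProbabilityMeasure Q] {f : α → ℝ}
    (hf : Integrable f P) : Integrable (fun z : α × β => f z.1) (P.prod Q) := by
  have h1 : (P.prod Q).map Prod.fst = P := by simp
  have := (integrable_map_measure (by rw [h1]; exact hf.aestronglyMeasurable)
    measurable_fst.aemeasurable).mp (by rw [h1]; exact hf)
  exact this

lemma int_comp_snd {α β : Type*} [MeasurableSpace α] [MeasurableSpace β] {P : Measure α}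
    {Q : Measure β} [IsProbabilityMeasure P] [IsProbabilityMeasure Q] {f : β → ℝ}
    (hf : Integrable f Q) : Integrable (fun z : α × β => f z.2) (P.prod Q) := by
  have h1 : (P.prod Q).map Prod.snd = Q := by simp
  have := (integrable_map_measure (by rw [h1]; exact hf.aestronglyMeasurable)
    measurable_snd.aemeasurable).mp (by rw [h1]; exact hf)
  exact this

lemma main_exp {Ω : Type*} [MeasurableSpace Ω] (μ : Measure Ω) [IsProbabilityMeasure μ]
    (X0 X1 X2 X3 : Ω → ℝ)
    (hm0 : Measurable X0) (hm1 : Measurable X1) (hm2 : Measurable X2) (hm3 : Measurable X3)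
    (hd0 : μ.map X0 = gaussianReal 0 (1/2)) (hd1 : μ.map X1 = gaussianReal 0 (1/2))
    (hd2 : μ.map X2 = gaussianReal 0 (1/2)) (hd3 : μ.map X3 = gaussianReal 0 (1/2))
    (h01 : IndepFun X0 X1 μ) (h23 : IndepFun X2 X3 μ)
    (hAB : IndepFun (fun ω => (X0 ω, X1 ω)) (fun ω => (X2 ω, X3 ω)) μ) :
    ∫ ω, |X0 ω * X2 ω - X1 ω * X3 ω| ∂μ = 1/2 := by
  set γ2 := (gaussianReal 0 (1/2)).prod (gaussianReal 0 (1/2)) with hγ2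
  have hA : Measurable fun ω => (X0 ω, X1 ω) := hm0.prodMk hm1
  have hB : Measurable fun ω => (X2 ω, X3 ω) := hm2.prodMk hm3
  have hmapA : μ.map (fun ω => (X0 ω, X1 ω)) = γ2 := by
    have := (indepFun_iff_map_prod_eq_prod_map_map hm0.aemeasurable hm1.aemeasurable).mp h01
    rw [hd0, hd1] at this
    exact this
  have hmapB : μ.map (fun ω => (X2 ω, X3 ω)) = γ2 := by
    have := (indepFun_iff_map_prod_eq_prod_map_map hm2.aemeasurable hm3.aemeasurable).mp h23
    rw [hd2, hd3] at this
    exact this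
  set T : Ω → (ℝ × ℝ) × (ℝ × ℝ) := fun ω => ((X0 ω, X1 ω), (X2 ω, X3 ω)) with hT
  have hTm : Measurable T := hA.prodMk hB
  have hmapT : μ.map T = γ2.prod γ2 := by
    have := (indepFun_iff_map_prod_eq_prod_map_map hA.aemeasurable hB.aemeasurable).mp hAB
    rw [hmapA, hmapB] at this
    exact this
  set F : (ℝ × ℝ) × (ℝ × ℝ) → ℝ := fun z => |z.1.1 * z.2.1 - z.1.2 * z.2.2| with hF
  have hFc : Continuous F := by
    apply Continuous.abs
    fun_prop
  have IntF : Integrable F (γ2.prod γ2) := by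
    have IgfA : Integrable (fun p : ℝ × ℝ => p.1 ^ 2 + p.2 ^ 2) γ2 :=
      (int_comp_fst Igf).add (int_comp_snd Igf)
    have H1 : Integrable (fun z : (ℝ × ℝ) × (ℝ × ℝ) => z.1.1 ^ 2 + z.1.2 ^ 2) (γ2.prod γ2) :=
      int_comp_fst IgfA
    have H2 : Integrable (fun z : (ℝ × ℝ) × (ℝ × ℝ) => z.2.1 ^ 2 + z.2.2 ^ 2) (γ2.prod γ2) :=
      int_comp_snd IgfA
    refine (H1.add H2).mono' hFc.aestronglyMeasurable (ae_of_all _ fun z => ?_)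
    simp only [hF, Real.norm_eq_abs, abs_abs, Pi.add_apply]
    refine abs_le.mpr ⟨?_, ?_⟩
    · nlinarith [sq_nonneg (z.1.1 + z.2.1), sq_nonneg (z.1.2 - z.2.2)]
    · nlinarith [sq_nonneg (z.1.1 - z.2.1), sq_nonneg (z.1.2 + z.2.2)]
  have step1 : ∫ ω, |X0 ω * X2 ω - X1 ω * X3 ω| ∂μ = ∫ z, F z ∂(γ2.prod γ2) := by
    rw [← hmapT, integral_map hTm.aemeasurable
      (hFc.aestronglyMeasurable.mono_measure le_rfl)]
  rw [step1, integral_prod F IntF]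
  have hinner : ∀ p : ℝ × ℝ, (∫ q, F (p, q) ∂γ2) = Real.sqrt (p.1 ^ 2 + p.2 ^ 2) / Real.sqrt π :=
    fun p => IL p.1 p.2
  rw [show (fun p : ℝ × ℝ => ∫ q, F (p, q) ∂γ2) =
      (fun p : ℝ × ℝ => Real.sqrt (p.1 ^ 2 + p.2 ^ 2) / Real.sqrt π) from funext hinner]
  simp_rw [div_eq_inv_mul]
  rw [MeasureTheory.integral_const_mul, OL]
  have hπ0 : Real.sqrt π ≠ 0 := by positivity
  field_simp

end SA_helpers



open Finset MeasureTheory ProbabilityTheory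

/-- with `h i = X (i,0) + I·X (i,1)` and `conj (g i) = X (i,2) + I·X (i,3)`,
where the `X (i,j)` are i.i.d. real `N(0,1/2)` Gaussians (so `h i, g i ~ CN(0,1)` i.i.d.),
and `c i = h i · conj (g i)`, the expected sign-alignment SNR satisfies
`E[γ(φ^SA)] ≥ E[(Σᵢ |Re cᵢ|)²] ≥ (Σᵢ E[|Re cᵢ|])² = N²/4`. -/
theorem stmt8 {Ω : Type*} [MeasurableSpace Ω] (μ : Measure Ω) [IsProbabilityMeasure μ]
    (N : ℕ) (X : Fin N × Fin 4 → Ω → ℝ)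
    (hmeas : ∀ p, Measurable (X p))
    (hindep : iIndepFun X μ)
    (hdist : ∀ p, μ.map (X p) = gaussianReal 0 (1/2))
    (c : Ω → Fin N → ℂ)
    (hc : ∀ ω i, c ω i =
      ((X (i, 0) ω : ℂ) + (X (i, 1) ω : ℂ) * Complex.I) *
      ((X (i, 2) ω : ℂ) + (X (i, 3) ω : ℂ) * Complex.I)) :
    (∫ ω, gam (c ω) (phiSA (c ω)) ∂μ) ≥ (∫ ω, (∑ i, |(c ω i).re|) ^ 2 ∂μ) ∧
    (∫ ω, (∑ i, |(c ω i).re|) ^ 2 ∂μ) ≥ (∑ i, ∫ ω, |(c ω i).re| ∂μ) ^ 2 ∧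
    (∑ i, ∫ ω, |(c ω i).re| ∂μ) ^ 2 = (N : ℝ) ^ 2 / 4 := by
  have hne : ∀ (a b : Fin 4), a ≠ b → ∀ (i : Fin N), ((i, a) : Fin N × Fin 4) ≠ (i, b) :=
    fun a b hab i h => hab (congrArg Prod.snd h)
  -- measurability of the c i
  have mc : ∀ i, Measurable fun ω => c ω i := by
    intro i
    have heq : (fun ω => c ω i) = fun ω =>
        ((X (i, 0) ω : ℂ) + (X (i, 1) ω : ℂ) * Complex.I) *
        ((X (i, 2) ω : ℂ) + (X (i, 3) ω : ℂ) * Complex.I) := funext fun ω => hc ω i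
    rw [heq]
    exact ((Complex.measurable_ofReal.comp (hmeas _)).add
      ((Complex.measurable_ofReal.comp (hmeas _)).mul_const _)).mul
      ((Complex.measurable_ofReal.comp (hmeas _)).add
      ((Complex.measurable_ofReal.comp (hmeas _)).mul_const _))
  have msgn : Measurable sgn := by
    unfold sgn
    exact Measurable.ite (measurableSet_le measurable_const measurable_id)
      measurable_const measurable_const
  have mg1 : Measurable fun ω => gam (c ω) fun j => sgn ((c ω j).re) := by
    unfold gam
    apply Measurable.pow_const
    apply continuous_norm.measurable.comp
    apply Finset.measurable_sum
    intro j _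
    exact (mc j).mul
      (Complex.measurable_ofReal.comp (msgn.comp (Complex.measurable_re.comp (mc j))))
  have mg2 : Measurable fun ω => gam (c ω) fun j => sgn ((c ω j).im) := by
    unfold gam
    apply Measurable.pow_const
    apply continuous_norm.measurable.comp
    apply Finset.measurable_sum
    intro j _
    exact (mc j).mul
      (Complex.measurable_ofReal.comp (msgn.comp (Complex.measurable_im.comp (mc j))))
  -- pointwise facts
  have hsgn_mul : ∀ t : ℝ, t * sgn t = |t| := by
    intro t
    unfold sgn
    split_ifs with h
    · rw [mul_one, abs_of_nonneg h]
    · rw [mul_neg_one, abs_of_neg (not_le.mp h)]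
  have hsgn_abs : ∀ t : ℝ, |sgn t| ≤ 1 := by
    intro t; unfold sgn; split_ifs <;> simp
  have keyLB : ∀ d : Fin N → ℂ, (∑ j, |(d j).re|) ^ 2 ≤ gam d (fun j => sgn ((d j).re)) := by
    intro d
    unfold gam
    have hre : (∑ j, d j * ((sgn ((d j).re) : ℝ) : ℂ)).re = ∑ j, |(d j).re| := by
      rw [Complex.re_sum]
      refine Finset.sum_congr rfl fun j _ => ?_
      simp only [Complex.mul_re, Complex.ofReal_re, Complex.ofReal_im, mul_zero, sub_zero]
      exact hsgn_mul _
    calc (∑ j, |(d j).re|) ^ 2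
        = |(∑ j, d j * ((sgn ((d j).re) : ℝ) : ℂ)).re| ^ 2 := by rw [← hre, sq_abs]
      _ ≤ ‖∑ j, d j * ((sgn ((d j).re) : ℝ) : ℂ)‖ ^ 2 :=
          pow_le_pow_left₀ (abs_nonneg _) (Complex.abs_re_le_norm _) 2
  have keyUB : ∀ (d : Fin N → ℂ) (φ : Fin N → ℝ), (∀ j, |φ j| ≤ 1) →
      gam d φ ≤ (N : ℝ) * ∑ j, ‖d j‖ ^ 2 := by
    intro d φ hφ
    unfold gam
    have h1 : ‖∑ j, d j * (φ j : ℂ)‖ ≤ ∑ j, ‖d j‖ := by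
      calc ‖∑ j, d j * (φ j : ℂ)‖ = ‖∑ j, d j * (φ j : ℂ)‖ := rfl
        _ ≤ ∑ j, ‖d j * (φ j : ℂ)‖ := norm_sum_le _ _
        _ ≤ ∑ j, ‖d j‖ := ?_
      refine Finset.sum_le_sum fun j _ => ?_
      rw [norm_mul, Complex.norm_real, Real.norm_eq_abs]
      calc ‖d j‖ * |φ j| ≤ ‖d j‖ * 1 :=
            mul_le_mul_of_nonneg_left (hφ j) (norm_nonneg _)
        _ = ‖d j‖ := mul_one _
    have h2 : (∑ j, ‖d j‖) ^ 2 ≤ (N : ℝ) * ∑ j, ‖d j‖ ^ 2 := by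
      have := sq_sum_le_card_mul_sum_sq (s := Finset.univ)
        (f := fun j => ‖d j‖)
      simpa using this
    exact le_trans (pow_le_pow_left₀ (norm_nonneg _) h1 2) h2
  have habs2 : ∀ ω j, ‖c ω j‖ ^ 2 =
      (X (j, 0) ω ^ 2 + X (j, 1) ω ^ 2) * (X (j, 2) ω ^ 2 + X (j, 3) ω ^ 2) := by
    intro ω j
    rw [hc]
    rw [Complex.sq_norm, Complex.normSq_mul, Complex.normSq_add_mul_I, Complex.normSq_add_mul_I]
  -- integrability
  have IntU : ∀ p, Integrable (fun ω => X p ω ^ 2) μ := by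
    intro p
    have h : Integrable (fun x : ℝ => x ^ 2) (μ.map (X p)) := by rw [hdist p]; exact Igf
    have hg : AEStronglyMeasurable (fun x : ℝ => x ^ 2) (μ.map (X p)) := by
      rw [hdist p]
      exact (measurable_id.pow_const 2).aestronglyMeasurable
    have := (integrable_map_measure hg (hmeas p).aemeasurable).mp h
    exact this
  have IntProd : ∀ j, Integrable
      (fun ω => (X (j, 0) ω ^ 2 + X (j, 1) ω ^ 2) * (X (j, 2) ω ^ 2 + X (j, 3) ω ^ 2)) μ := by
    intro j
    have hUV : IndepFun (fun ω => X (j, 0) ω ^ 2 + X (j, 1) ω ^ 2)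
        (fun ω => X (j, 2) ω ^ 2 + X (j, 3) ω ^ 2) μ := by
      have h := hindep.indepFun_prodMk_prodMk hmeas (j, 0) (j, 1) (j, 2) (j, 3)
        (hne _ _ (by decide) j) (hne _ _ (by decide) j) (hne _ _ (by decide) j)
        (hne _ _ (by decide) j)
      have := h.comp (φ := fun p : ℝ × ℝ => p.1 ^ 2 + p.2 ^ 2)
        (ψ := fun p : ℝ × ℝ => p.1 ^ 2 + p.2 ^ 2) (by fun_prop) (by fun_prop)
      exact this
    have := hUV.integrable_mul ((IntU _).add (IntU _)) ((IntU _).add (IntU _))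
    exact this
  have IntBig : Integrable (fun ω => (N : ℝ) * ∑ j, ‖c ω j‖ ^ 2) μ := by
    apply Integrable.const_mul
    refine integrable_finset_sum _ fun j _ => ?_
    have heq : (fun ω => ‖c ω j‖ ^ 2) = fun ω =>
        (X (j, 0) ω ^ 2 + X (j, 1) ω ^ 2) * (X (j, 2) ω ^ 2 + X (j, 3) ω ^ 2) :=
      funext fun ω => habs2 ω j
    rw [heq]; exact IntProd j
  have mgam_sa : Measurable fun ω => gam (c ω) (phiSA (c ω)) := by
    have hrepr : (fun ω => gam (c ω) (phiSA (c ω))) = fun ω =>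
        if gam (c ω) (fun j => sgn ((c ω j).re)) ≥ gam (c ω) (fun j => sgn ((c ω j).im))
        then gam (c ω) (fun j => sgn ((c ω j).re))
        else gam (c ω) (fun j => sgn ((c ω j).im)) := by
      funext ω; unfold phiSA; split_ifs <;> rfl
    rw [hrepr]
    exact Measurable.ite (measurableSet_le mg2 mg1) mg1 mg2
  have hgam_ge : ∀ ω, gam (c ω) (fun j => sgn ((c ω j).re)) ≤ gam (c ω) (phiSA (c ω)) := by
    intro ω; unfold phiSA; split_ifs with h
    · exact le_rfl
    · exact (not_le.mp h).le
  have hgam_ub : ∀ ω, gam (c ω) (phiSA (c ω)) ≤ (N : ℝ) * ∑ j, ‖c ω j‖ ^ 2 := by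
    intro ω; unfold phiSA; split_ifs with h
    · exact keyUB _ _ fun j => hsgn_abs _
    · exact keyUB _ _ fun j => hsgn_abs _
  have IntGamSA : Integrable (fun ω => gam (c ω) (phiSA (c ω))) μ := by
    refine IntBig.mono' mgam_sa.aestronglyMeasurable (ae_of_all _ fun ω => ?_)
    rw [Real.norm_eq_abs, abs_of_nonneg (by unfold gam; positivity)]
    exact hgam_ub ω
  have mY : Measurable fun ω => ∑ j, |(c ω j).re| :=
    Finset.measurable_sum _ fun j _ => (Complex.measurable_re.comp (mc j)).abs
  have hYub : ∀ ω, (∑ j, |(c ω j).re|) ^ 2 ≤ (N : ℝ) * ∑ j, ‖c ω j‖ ^ 2 := by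
    intro ω
    calc (∑ j, |(c ω j).re|) ^ 2 ≤ (N : ℝ) * ∑ j, |(c ω j).re| ^ 2 := by
          have := sq_sum_le_card_mul_sum_sq (s := Finset.univ)
            (f := fun j => |(c ω j).re|)
          simpa using this
      _ ≤ (N : ℝ) * ∑ j, ‖c ω j‖ ^ 2 := by
          refine mul_le_mul_of_nonneg_left (Finset.sum_le_sum fun j _ => ?_) (Nat.cast_nonneg N)
          rw [sq_abs]
          calc (c ω j).re ^ 2 = |(c ω j).re| ^ 2 := (sq_abs _).symm
            _ ≤ ‖c ω j‖ ^ 2 :=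
                pow_le_pow_left₀ (abs_nonneg _) (Complex.abs_re_le_norm _) 2
  have IntY2 : Integrable (fun ω => (∑ j, |(c ω j).re|) ^ 2) μ := by
    refine IntBig.mono' (mY.pow_const 2).aestronglyMeasurable (ae_of_all _ fun ω => ?_)
    rw [Real.norm_eq_abs, abs_of_nonneg (sq_nonneg _)]
    exact hYub ω
  have IntRej : ∀ j, Integrable (fun ω => |(c ω j).re|) μ := by
    intro j
    refine ((integrable_const (1 : ℝ)).add (IntProd j)).mono'
      ((Complex.measurable_re.comp (mc j)).abs.aestronglyMeasurable) (ae_of_all _ fun ω => ?_)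
    rw [Real.norm_eq_abs, abs_abs, Pi.add_apply]
    calc |(c ω j).re| ≤ ‖c ω j‖ := Complex.abs_re_le_norm _
      _ ≤ 1 + ‖c ω j‖ ^ 2 := by nlinarith [norm_nonneg (c ω j)]
      _ = (fun _ => (1:ℝ)) ω + (X (j, 0) ω ^ 2 + X (j, 1) ω ^ 2) *
            (X (j, 2) ω ^ 2 + X (j, 3) ω ^ 2) := by rw [habs2]
  -- part 1
  have part1 : ∫ ω, (∑ j, |(c ω j).re|) ^ 2 ∂μ ≤ ∫ ω, gam (c ω) (phiSA (c ω)) ∂μ := by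
    refine integral_mono_of_nonneg (ae_of_all _ fun ω => sq_nonneg _) IntGamSA
      (ae_of_all _ fun ω => le_trans (keyLB (c ω)) (hgam_ge ω))
  -- part 2
  have hsum_int : ∫ ω, (∑ j, |(c ω j).re|) ∂μ = ∑ j, ∫ ω, |(c ω j).re| ∂μ := by
    rw [integral_finset_sum _ fun j _ => IntRej j]
  have memL2 : MemLp (fun ω => ∑ j, |(c ω j).re|) 2 μ :=
    (memLp_two_iff_integrable_sq mY.aestronglyMeasurable).mpr (by simpa using IntY2)
  have part2 : (∑ j, ∫ ω, |(c ω j).re| ∂μ) ^ 2 ≤ ∫ ω, (∑ j, |(c ω j).re|) ^ 2 ∂μ := by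
    have h2 := variance_nonneg (fun ω => ∑ j, |(c ω j).re|) μ
    rw [variance_eq_sub memL2] at h2
    have hY2eq : μ[(fun ω => ∑ j, |(c ω j).re|) ^ 2] = ∫ ω, (∑ j, |(c ω j).re|) ^ 2 ∂μ := rfl
    rw [hY2eq] at h2
    rw [← hsum_int]
    linarith
  -- part 3
  have hExp : ∀ j, ∫ ω, |(c ω j).re| ∂μ = 1/2 := by
    intro j
    have hre : (fun ω => |(c ω j).re|) =
        fun ω => |X (j, 0) ω * X (j, 2) ω - X (j, 1) ω * X (j, 3) ω| := by
      funext ω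
      rw [hc]
      congr 1
      simp [Complex.mul_re, Complex.add_re, Complex.add_im, Complex.mul_im]
    rw [hre]
    exact main_exp μ _ _ _ _ (hmeas _) (hmeas _) (hmeas _) (hmeas _)
      (hdist _) (hdist _) (hdist _) (hdist _)
      (hindep.indepFun (hne 0 1 (by decide) j))
      (hindep.indepFun (hne 2 3 (by decide) j))
      (hindep.indepFun_prodMk_prodMk hmeas (j, 0) (j, 1) (j, 2) (j, 3)
        (hne _ _ (by decide) j) (hne _ _ (by decide) j) (hne _ _ (by decide) j)
        (hne _ _ (by decide) j))
  have hsum : (∑ j, ∫ ω, |(c ω j).re| ∂μ) = (N : ℝ) / 2 := by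
    rw [Finset.sum_congr rfl fun j _ => hExp j]
    simp [Finset.sum_const, Finset.card_univ]
    ring
  refine ⟨part1, part2, ?_⟩
  rw [hsum]
  ring
end

section
/- Under pure LoS channels, i.e., when each c_i has unit modulus (c_i = exp(i θ_i)), the sign-alignment SNR satisfies γ(φ^SA) ≥ N²/4. -/
open Finset

lemma gam_ge_re {N : ℕ} (c : Fin N → ℂ) (φ : Fin N → ℝ) :
    gam c φ ≥ (∑ i, (c i).re * φ i) ^ 2 := by
  unfold gam
  rw [Complex.sq_norm, Complex.normSq_apply]
  have : (∑ i, c i * (φ i : ℂ)).re = ∑ i, (c i).re * φ i := by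
    rw [Complex.re_sum]
    apply Finset.sum_congr rfl
    intro i _
    simp [Complex.mul_re]
  rw [← this]
  nlinarith [sq_nonneg (∑ i, c i * (φ i : ℂ)).im, sq_nonneg (∑ i, c i * (φ i : ℂ)).re]

lemma gam_ge_im {N : ℕ} (c : Fin N → ℂ) (φ : Fin N → ℝ) :
    gam c φ ≥ (∑ i, (c i).im * φ i) ^ 2 := by
  unfold gam
  rw [Complex.sq_norm, Complex.normSq_apply]
  have : (∑ i, c i * (φ i : ℂ)).im = ∑ i, (c i).im * φ i := by
    rw [Complex.im_sum]
    apply Finset.sum_congr rfl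
    intro i _
    simp [Complex.mul_im]
  rw [← this]
  nlinarith [sq_nonneg (∑ i, c i * (φ i : ℂ)).im, sq_nonneg (∑ i, c i * (φ i : ℂ)).re]

theorem stmt12 {N : ℕ} (c : Fin N → ℂ) (hunit : ∀ i, ‖c i‖ = 1) :
    gam c (phiSA c) ≥ (N : ℝ) ^ 2 / 4 := by
  set A := ∑ i, |(c i).re| with hA
  set B := ∑ i, |(c i).im| with hB
  have hAnn : 0 ≤ A := Finset.sum_nonneg fun i _ => abs_nonneg _
  have hBnn : 0 ≤ B := Finset.sum_nonneg fun i _ => abs_nonneg _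
  have hAB : A + B ≥ (N : ℝ) := by
    rw [hA, hB, ← Finset.sum_add_distrib]
    calc (N : ℝ) = ∑ _i : Fin N, (1 : ℝ) := by simp
    _ ≤ ∑ i, (|(c i).re| + |(c i).im|) := by
        apply Finset.sum_le_sum
        intro i _
        calc (1 : ℝ) = ‖c i‖ := (hunit i).symm
        _ ≤ |(c i).re| + |(c i).im| := Complex.norm_le_abs_re_add_abs_im _
  have hR : gam c (fun i => sgn (c i).re) ≥ A ^ 2 := by
    have := gam_ge_re c (fun i => sgn (c i).re)
    simpa [mul_sgn, hA] using this
  have hI : gam c (fun i => sgn (c i).im) ≥ B ^ 2 := by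
    have := gam_ge_im c (fun i => sgn (c i).im)
    simpa [mul_sgn, hB] using this
  unfold phiSA
  split
  · rename_i h
    nlinarith [sq_nonneg (A - B), sq_nonneg (A + B - N)]
  · rename_i h
    push_neg at h
    nlinarith [sq_nonneg (A - B), sq_nonneg (A + B - N)]
end
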